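/- Let n ≥ 3 and k ≥ 2, and let Pⁿₖ denote the Legendre polynomial of dimension n and degree k normalized by Pⁿₖ(1) = 1. Then (n-1)/((k-1)(k+n-1)) · A₂Pⁿₖ = (k(k+n-3)/(2k+n-2))·Pⁿ⁺²ₖ₋₂ - ((k+1)(k+n-2)/(2k+n-2))·Pⁿ⁺²ₖ, where A₂ψ(t) = (1-t²)ψ''(t) + ψ(t) - tψ'(t). -/

import Mathlib

/-- `p` is the Legendre polynomial of dimension `n` and degree `k`: it is a polynomial
function, normalized by `p 1 = 1`, satisfying the Legendre ODE
`(1-t²)y'' - (n-1)t·y' + k(k+n-2)y = 0`. -/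
def IsLegendre (n k : ℕ) (p : ℝ → ℝ) : Prop :=
  (∃ q : Polynomial ℝ, ∀ t, p t = q.eval t) ∧ p 1 = 1 ∧
    ∀ t : ℝ, (1 - t ^ 2) * iteratedDeriv 2 p t - ((n : ℝ) - 1) * t * deriv p t +
      (k : ℝ) * ((k : ℝ) + (n : ℝ) - 2) * p t = 0

open Polynomial

set_option maxHeartbeats 2000000

noncomputable section LegAux

private lemma legE (ν κ : ℝ) (q : Polynomial ℝ)
    (h : (1 - X*X) * derivative (derivative q) - (C ν - 1) * X * derivative q
      + C κ * (C κ + C ν - 2) * q = 0) :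
    ∀ j : ℕ, (1 - X*X) * derivative^[j+2] q
      - (C ν - 1 + 2*((j : ℕ) : Polynomial ℝ)) * X * derivative^[j+1] q
      + (C κ * (C κ + C ν - 2) - ((j:ℕ) : Polynomial ℝ)*(((j:ℕ) : Polynomial ℝ) + C ν - 2))
        * derivative^[j] q = 0 := by
  intro j
  induction j with
  | zero =>
      rw [show derivative^[0+2] q = derivative (derivative q) from rfl,
        show derivative^[0+1] q = derivative q from rfl,
        show derivative^[0] q = q from rfl]
      push_cast
      linear_combination h
  | succ j ih =>
      have hder := congrArg derivative ih
      simp only [derivative_add, derivative_sub, derivative_mul, derivative_X, derivative_C,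
        derivative_one, derivative_natCast, derivative_ofNat, map_zero, zero_mul, mul_zero,
        zero_add, add_zero, mul_one, sub_zero, zero_sub,
        ← Function.iterate_succ_apply'] at hder
      push_cast
      linear_combination hder

private lemma poly_unique (ν κ : ℝ) (hν : 1 < ν) (q : Polynomial ℝ)
    (h : (1 - X*X) * derivative (derivative q) - (C ν - 1) * X * derivative q
      + C κ * (C κ + C ν - 2) * q = 0) (h1 : q.eval 1 = 0) : q = 0 := by
  have hE := legE ν κ q h
  have key : ∀ j : ℕ, (derivative^[j] q).eval 1 = 0 := by
    intro j
    induction j with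
    | zero => simpa using h1
    | succ j ih =>
        have h2 := congrArg (eval 1) (hE j)
        simp only [eval_add, eval_sub, eval_mul, eval_one, eval_X, eval_C, eval_natCast,
          eval_ofNat, eval_zero, ih, mul_zero, one_mul, mul_one] at h2
        have hpos : (0:ℝ) < ν - 1 + 2*(j:ℝ) := by
          have : (0:ℝ) ≤ (j:ℝ) := Nat.cast_nonneg j
          linarith
        have h3 : (ν - 1 + 2*(j:ℝ)) * (eval 1 (derivative^[j+1] q)) = 0 := by
          linarith [h2]
        rcases mul_eq_zero.1 h3 with h4 | h4
        · exact absurd h4 (ne_of_gt hpos)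
        · exact h4
  apply eq_zero_of_hasseDeriv_eq_zero q 1
  intro m
  have h4 : (Nat.factorial m) • (hasseDeriv m q) = derivative^[m] q := by
    have := congrFun (Polynomial.factorial_smul_hasseDeriv (R:=ℝ) (k:=m)) q
    simpa using this
  have h5 := congrArg (eval 1) h4
  rw [key m, nsmul_eq_mul, eval_mul, eval_natCast] at h5
  have hne : ((Nat.factorial m : ℕ) : ℝ) ≠ 0 := Nat.cast_ne_zero.2 (Nat.factorial_ne_zero m)
  exact (mul_eq_zero.1 h5).resolve_left hne

private lemma eval_iteratedDeriv (q : Polynomial ℝ) (m : ℕ) :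
    iteratedDeriv m (fun t => q.eval t) = fun t => (derivative^[m] q).eval t := by
  induction m with
  | zero => simp
  | succ m ih =>
      rw [iteratedDeriv_succ, ih]
      funext x
      rw [Polynomial.deriv, Function.iterate_succ_apply']

private def Apoly (q : Polynomial ℝ) : Polynomial ℝ :=
  (1 - X*X) * derivative (derivative q) + q - X * derivative q

private def Upoly (ν κ : ℝ) (q : Polynomial ℝ) : Polynomial ℝ :=
  (1*(C κ)*(C κ) + 1*(C ν)*(C κ)) * q + ((-1)*X*(C κ)*(C κ) + (-1)*X*(C ν)*(C κ)) * (derivative q) + ((-3) + 1*(C κ)*(C κ) + 1*(C ν)*(C κ) + 6*X*X + (-1)*X*X*(C κ)*(C κ) + 3*X*X*(C ν) + (-1)*X*X*(C ν)*(C κ)) * (derivative (derivative q)) + ((-6)*X + (-1)*X*(C ν) + 6*X*X*X + 1*X*X*X*(C ν)) * (derivative (derivative (derivative q))) + (1 + (-2)*X*X + 1*X*X*X*X) * (derivative (derivative (derivative (derivative q))))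

private def Wpoly (ν κ : ℝ) (q : Polynomial ℝ) : Polynomial ℝ :=
  Upoly ν κ q - C (2*(2*κ + ν - 2)) * Apoly q

private lemma monster (ν κ : ℝ) (q : Polynomial ℝ)
    (h : (1 - X*X) * derivative (derivative q) - (C ν - 1) * X * derivative q
      + C κ * (C κ + C ν - 2) * q = 0) :
    ((1 - X*X) * derivative (derivative (Upoly ν κ q)) - (C ν + 1) * X * derivative (Upoly ν κ q)
      + (C κ - 2) * (C κ + C ν - 2) * Upoly ν κ q = 0)
    ∧ ((1 - X*X) * derivative (derivative (Wpoly ν κ q)) - (C ν + 1) * X * derivative (Wpoly ν κ q)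
      + C κ * (C κ + C ν) * Wpoly ν κ q = 0) := by
  have hE := legE ν κ q h
  have h0 := hE 0; have h1 := hE 1; have h2 := hE 2; have h3 := hE 3; have h4 := hE 4
  norm_num at h0 h1 h2 h3 h4
  have e1 : derivative (Upoly ν κ q) =
      (12*X + (-3)*X*(C κ)*(C κ) + 6*X*(C ν) + (-3)*X*(C ν)*(C κ)) * (derivative (derivative q)) + ((-9) + 1*(C κ)*(C κ) + (-1)*(C ν) + 1*(C ν)*(C κ) + 24*X*X + (-1)*X*X*(C κ)*(C κ) + 6*X*X*(C ν) + (-1)*X*X*(C ν)*(C κ)) * (derivative (derivative (derivative q))) + ((-10)*X + (-1)*X*(C ν) + 10*X*X*X + 1*X*X*X*(C ν)) * (derivative (derivative (derivative (derivative q)))) + (1 + (-2)*X*X + 1*X*X*X*X) * (derivative (derivative (derivative (derivative (derivative q))))) := by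
    unfold Upoly
    simp only [derivative_add, derivative_sub, derivative_mul, derivative_X, derivative_C,
      derivative_one, derivative_ofNat, derivative_neg]
    ring
  have e2 : derivative ((12*X + (-3)*X*(C κ)*(C κ) + 6*X*(C ν) + (-3)*X*(C ν)*(C κ)) * (derivative (derivative q)) + ((-9) + 1*(C κ)*(C κ) + (-1)*(C ν) + 1*(C ν)*(C κ) + 24*X*X + (-1)*X*X*(C κ)*(C κ) + 6*X*X*(C ν) + (-1)*X*X*(C ν)*(C κ)) * (derivative (derivative (derivative q))) + ((-10)*X + (-1)*X*(C ν) + 10*X*X*X + 1*X*X*X*(C ν)) * (derivative (derivative (derivative (derivative q)))) + (1 + (-2)*X*X + 1*X*X*X*X) * (derivative (derivative (derivative (derivative (derivative q)))))) =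
      (12 + (-3)*(C κ)*(C κ) + 6*(C ν) + (-3)*(C ν)*(C κ)) * (derivative (derivative q)) + (60*X + (-5)*X*(C κ)*(C κ) + 18*X*(C ν) + (-5)*X*(C ν)*(C κ)) * (derivative (derivative (derivative q))) + ((-19) + 1*(C κ)*(C κ) + (-2)*(C ν) + 1*(C ν)*(C κ) + 54*X*X + (-1)*X*X*(C κ)*(C κ) + 9*X*X*(C ν) + (-1)*X*X*(C ν)*(C κ)) * (derivative (derivative (derivative (derivative q)))) + ((-14)*X + (-1)*X*(C ν) + 14*X*X*X + 1*X*X*X*(C ν)) * (derivative (derivative (derivative (derivative (derivative q))))) + (1 + (-2)*X*X + 1*X*X*X*X) * (derivative (derivative (derivative (derivative (derivative (derivative q)))))) := by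
    simp only [derivative_add, derivative_sub, derivative_mul, derivative_X, derivative_C,
      derivative_one, derivative_ofNat, derivative_neg]
    ring
  have a1 : derivative (Apoly q) = ((-3)*X) * (derivative (derivative q)) + (1 + (-1)*X*X) * (derivative (derivative (derivative q))) := by
    unfold Apoly
    simp only [derivative_add, derivative_sub, derivative_mul, derivative_X, derivative_C,
      derivative_one, derivative_ofNat, derivative_neg]
    ring
  have a2 : derivative (((-3)*X) * (derivative (derivative q)) + (1 + (-1)*X*X) * (derivative (derivative (derivative q)))) = ((-3)) * (derivative (derivative q)) + ((-5)*X) * (derivative (derivative (derivative q))) + (1 + (-1)*X*X) * (derivative (derivative (derivative (derivative q)))) := by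
    simp only [derivative_add, derivative_sub, derivative_mul, derivative_X, derivative_C,
      derivative_one, derivative_ofNat, derivative_neg]
    ring
  have hLA : (1 - X*X) * (((-3)) * (derivative (derivative q)) + ((-5)*X) * (derivative (derivative (derivative q))) + (1 + (-1)*X*X) * (derivative (derivative (derivative (derivative q))))) - (C ν + 1) * X * (((-3)*X) * (derivative (derivative q)) + (1 + (-1)*X*X) * (derivative (derivative (derivative q))))
      + C κ * (C κ + C ν) * Apoly q = Upoly ν κ q := by
    unfold Apoly Upoly
    ring
  have claimA : (1 - X*X) * ((12 + (-3)*(C κ)*(C κ) + 6*(C ν) + (-3)*(C ν)*(C κ)) * (derivative (derivative q)) + (60*X + (-5)*X*(C κ)*(C κ) + 18*X*(C ν) + (-5)*X*(C ν)*(C κ)) * (derivative (derivative (derivative q))) + ((-19) + 1*(C κ)*(C κ) + (-2)*(C ν) + 1*(C ν)*(C κ) + 54*X*X + (-1)*X*X*(C κ)*(C κ) + 9*X*X*(C ν) + (-1)*X*X*(C ν)*(C κ)) * (derivative (derivative (derivative (derivative q)))) + ((-14)*X + (-1)*X*(C ν) + 14*X*X*X + 1*X*X*X*(C ν)) * (derivative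 (derivative (derivative (derivative (derivative q))))) + (1 + (-2)*X*X + 1*X*X*X*X) * (derivative (derivative (derivative (derivative (derivative (derivative q))))))) - (C ν + 1) * X * ((12*X + (-3)*X*(C κ)*(C κ) + 6*X*(C ν) + (-3)*X*(C ν)*(C κ)) * (derivative (derivative q)) + ((-9) + 1*(C κ)*(C κ) + (-1)*(C ν) + 1*(C ν)*(C κ) + 24*X*X + (-1)*X*X*(C κ)*(C κ) + 6*X*X*(C ν) + (-1)*X*X*(C ν)*(C κ)) * (derivative (derivative (derivative q))) + ((-10)*X + (-1)*X*(C ν) + 10*X*X*X + 1*X*X*X*(C ν)) * (derivative (derivative (derivative (derivative q)))) + (1 + (-2)*X*X + 1*X*X*X*X) * (derivative (derivative (derivative (derivative (derivative q))))))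
      + (C κ - 2) * (C κ + C ν - 2) * Upoly ν κ q = 0 := by
    unfold Upoly
    linear_combination (((-2)*(C κ) + 1*(C κ)*(C κ) + (-2)*(C ν) + 1*(C ν)*(C κ))) * h0 + ((2*X*(C κ) + (-1)*X*(C κ)*(C κ) + 2*X*(C ν) + (-1)*X*(C ν)*(C κ))) * h1 + (((-7) + (-2)*(C κ) + 1*(C κ)*(C κ) + 1*(C ν)*(C κ) + 12*X*X + 2*X*X*(C κ) + (-1)*X*X*(C κ)*(C κ) + 5*X*X*(C ν) + (-1)*X*X*(C ν)*(C κ))) * h2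
      + (((-8)*X + (-1)*X*(C ν) + 8*X*X*X + 1*X*X*X*(C ν))) * h3 + ((1 + (-2)*X*X + 1*X*X*X*X)) * h4
  constructor
  · rw [e1, e2]
    exact claimA
  · have hCc : (C (2*(2*κ + ν - 2)) : Polynomial ℝ) = 2*(2*C κ + C ν - 2) := by
      simp only [map_mul, map_sub, map_add, map_ofNat]
    have w1 : derivative (Wpoly ν κ q) =
        ((12*X + (-3)*X*(C κ)*(C κ) + 6*X*(C ν) + (-3)*X*(C ν)*(C κ)) * (derivative (derivative q)) + ((-9) + 1*(C κ)*(C κ) + (-1)*(C ν) + 1*(C ν)*(C κ) + 24*X*X + (-1)*X*X*(C κ)*(C κ) + 6*X*X*(C ν) + (-1)*X*X*(C ν)*(C κ)) * (derivative (derivative (derivative q))) + ((-10)*X + (-1)*X*(C ν) + 10*X*X*X + 1*X*X*X*(C ν)) * (derivative (derivative (derivative (derivative q)))) + (1 + (-2)*X*X + 1*X*X*X*X) * (derivative (derivative (derivative (derivative (derivative q)))))) - C (2*(2*κ + ν - 2)) * (((-3)*X) * (derivative (derivative q)) + (1 + (-1)*X*X) * (derivative (derivative (derivative q)))) := by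
      unfold Wpoly
      rw [derivative_sub, derivative_C_mul, e1, a1]
    have w2 : derivative (derivative (Wpoly ν κ q)) =
        ((12 + (-3)*(C κ)*(C κ) + 6*(C ν) + (-3)*(C ν)*(C κ)) * (derivative (derivative q)) + (60*X + (-5)*X*(C κ)*(C κ) + 18*X*(C ν) + (-5)*X*(C ν)*(C κ)) * (derivative (derivative (derivative q))) + ((-19) + 1*(C κ)*(C κ) + (-2)*(C ν) + 1*(C ν)*(C κ) + 54*X*X + (-1)*X*X*(C κ)*(C κ) + 9*X*X*(C ν) + (-1)*X*X*(C ν)*(C κ)) * (derivative (derivative (derivative (derivative q)))) + ((-14)*X + (-1)*X*(C ν) + 14*X*X*X + 1*X*X*X*(C ν)) * (derivative (derivative (derivative (derivative (derivative q))))) + (1 + (-2)*X*X + 1*X*X*X*X) * (derivative (derivative (derivative (derivative (derivative (derivative q))))))) - C (2*(2*κ + ν - 2)) * (((-3)) * (derivative (derivative q)) + ((-5)*X) * (derivative (derivative (derivative q))) + (1 + (-1)*X*X) * (derivative (derivative (derivative (derivative q))))) := by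
      rw [w1, derivative_sub, derivative_C_mul, e2, a2]
    rw [w2, w1]
    unfold Wpoly
    rw [hCc]
    linear_combination claimA - (2*(2*C κ + C ν - 2)) * hLA

private lemma monster_eval (ν κ : ℝ) (hν1 : ν - 1 ≠ 0) (hν2 : ν + 1 ≠ 0) (q : Polynomial ℝ)
    (h : (1 - X*X) * derivative (derivative q) - (C ν - 1) * X * derivative q
      + C κ * (C κ + C ν - 2) * q = 0) (h1 : q.eval 1 = 1) :
    (Upoly ν κ q).eval 1 = 2*κ*(κ+ν-3)*(κ-1)*(κ+ν-1)/(ν-1)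
    ∧ (Wpoly ν κ q).eval 1 = 2*(κ-1)*(κ+ν-1)*(κ+1)*(κ+ν-2)/(ν-1) := by
  have hE := legE ν κ q h
  have hh1 := hE 1
  norm_num at hh1
  have r1 := congrArg (eval 1) h
  have r2 := congrArg (eval 1) hh1
  simp only [eval_add, eval_sub, eval_mul, eval_one, eval_X, eval_C, eval_ofNat, eval_zero,
    h1, mul_one, one_mul] at r1 r2
  have hz1 : (derivative q).eval 1 = κ*(κ+ν-2)/(ν-1) := by
    rw [eq_div_iff hν1]
    linarith [r1]
  have hz2 : (derivative (derivative q)).eval 1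
      = (κ*(κ+ν-2) - (ν-1)) * (κ*(κ+ν-2)) / ((ν+1)*(ν-1)) := by
    rw [eq_div_iff (mul_ne_zero hν2 hν1)]
    have hz1' : (derivative q).eval 1 * (ν-1) = κ*(κ+ν-2) := by
      rw [hz1]; field_simp
    linear_combination (-(ν-1)) * r2 + (κ*(κ+ν-2) - (ν-1)) * hz1'
  constructor
  · unfold Upoly
    simp only [eval_add, eval_sub, eval_mul, eval_one, eval_X, eval_C, eval_ofNat, eval_neg,
      h1, hz1, hz2, mul_one, one_mul]
    field_simp
    ring
  · unfold Wpoly Upoly Apoly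
    simp only [eval_add, eval_sub, eval_mul, eval_one, eval_X, eval_C, eval_ofNat, eval_neg,
      h1, hz1, hz2, mul_one, one_mul]
    field_simp
    ring

end LegAux

noncomputable section LegAux2

open Polynomial

private lemma isLegendre_poly_spec {m j : ℕ} {p : ℝ → ℝ} (h : IsLegendre m j p) :
    ∃ q : Polynomial ℝ, (∀ t, p t = q.eval t) ∧ q.eval 1 = 1 ∧
      (1 - X*X) * derivative (derivative q) - (C ((m:ℝ)) - 1) * X * derivative q
        + C ((j:ℝ)) * (C ((j:ℝ)) + C ((m:ℝ)) - 2) * q = 0 := by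
  obtain ⟨⟨q, hq⟩, hp1, hode⟩ := h
  have hpfun : p = fun t => q.eval t := funext hq
  refine ⟨q, hq, by rw [← hq 1]; exact hp1, ?_⟩
  refine Polynomial.funext fun t => ?_
  rw [eval_zero]
  have h2 := hode t
  rw [hpfun] at h2
  rw [eval_iteratedDeriv q 2,
    show derivative^[2] q = derivative (derivative q) from rfl] at h2
  simp only [Polynomial.deriv] at h2
  simp only [eval_add, eval_sub, eval_mul, eval_one, eval_X, eval_C, eval_ofNat, eval_pow]
  linear_combination h2

private lemma isLegendre_of_poly (m j : ℕ) (q : Polynomial ℝ) (h1 : q.eval 1 = 1)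
    (hode : (1 - X*X) * derivative (derivative q) - (C ((m:ℝ)) - 1) * X * derivative q
      + C ((j:ℝ)) * (C ((j:ℝ)) + C ((m:ℝ)) - 2) * q = 0) :
    IsLegendre m j (fun t => q.eval t) := by
  refine ⟨⟨q, fun t => rfl⟩, h1, fun t => ?_⟩
  rw [eval_iteratedDeriv q 2,
    show derivative^[2] q = derivative (derivative q) from rfl]
  simp only [Polynomial.deriv]
  have h2 := congrArg (eval t) hode
  simp only [eval_add, eval_sub, eval_mul, eval_one, eval_X, eval_C, eval_ofNat,
    eval_zero] at h2
  linear_combination h2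

private lemma isLegendre_unique {m j : ℕ} (hm : 3 ≤ m) {p1 p2 : ℝ → ℝ}
    (h1 : IsLegendre m j p1) (h2 : IsLegendre m j p2) : p1 = p2 := by
  obtain ⟨q1, hq1, he1, ho1⟩ := isLegendre_poly_spec h1
  obtain ⟨q2, hq2, he2, ho2⟩ := isLegendre_poly_spec h2
  have hm' : (1:ℝ) < (m:ℝ) := by
    have h3 : (3:ℝ) ≤ (m:ℝ) := by exact_mod_cast hm
    linarith
  have hzero : q1 - q2 = 0 := by
    apply poly_unique ((m:ℝ)) ((j:ℝ)) hm' (q1 - q2)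
    · rw [derivative_sub, derivative_sub]
      linear_combination ho1 - ho2
    · rw [eval_sub, he1, he2, sub_self]
  have hq : q1 = q2 := sub_eq_zero.1 hzero
  funext t
  rw [hq1 t, hq2 t, hq]

end LegAux2

/-- For `n ≥ 3`, `k ≥ 2`, with `P = Pⁿₖ`, `Q = Pⁿ⁺²ₖ₋₂`, `R = Pⁿ⁺²ₖ`:
`(n-1)/((k-1)(k+n-1)) · A₂Pⁿₖ = (k(k+n-3)/(2k+n-2))·Pⁿ⁺²ₖ₋₂ - ((k+1)(k+n-2)/(2k+n-2))·Pⁿ⁺²ₖ`,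
where `A₂ψ(t) = (1-t²)ψ''(t) + ψ(t) - tψ'(t)`. -/
theorem legendre_A2_identity (n k : ℕ) (hn : 3 ≤ n) (hk : 2 ≤ k)
    (P Q R : ℝ → ℝ) (hP : IsLegendre n k P) (hQ : IsLegendre (n + 2) (k - 2) Q)
    (hR : IsLegendre (n + 2) k R) :
    ∀ t : ℝ,
      (((n : ℝ) - 1) / (((k : ℝ) - 1) * ((k : ℝ) + (n : ℝ) - 1))) *
          ((1 - t ^ 2) * iteratedDeriv 2 P t + P t - t * deriv P t) =
        ((k : ℝ) * ((k : ℝ) + (n : ℝ) - 3) / (2 * (k : ℝ) + (n : ℝ) - 2)) * Q t -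
          (((k : ℝ) + 1) * ((k : ℝ) + (n : ℝ) - 2) / (2 * (k : ℝ) + (n : ℝ) - 2)) * R t := by
  intro t
  have hn3 : (3:ℝ) ≤ (n:ℝ) := by exact_mod_cast hn
  have hk2 : (2:ℝ) ≤ (k:ℝ) := by exact_mod_cast hk
  have d1 : (n:ℝ) - 1 ≠ 0 := by intro hcon; nlinarith [hn3, hk2]
  have d2 : (n:ℝ) + 1 ≠ 0 := by intro hcon; nlinarith [hn3, hk2]
  have d3 : (k:ℝ) - 1 ≠ 0 := by intro hcon; nlinarith [hn3, hk2]
  have d4 : (k:ℝ) + (n:ℝ) - 1 ≠ 0 := by intro hcon; nlinarith [hn3, hk2]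
  have d5 : (k:ℝ) ≠ 0 := by intro hcon; nlinarith [hn3, hk2]
  have d6 : (k:ℝ) + (n:ℝ) - 3 ≠ 0 := by intro hcon; nlinarith [hn3, hk2]
  have d7 : 2*(k:ℝ) + (n:ℝ) - 2 ≠ 0 := by intro hcon; nlinarith [hn3, hk2]
  have d8 : (k:ℝ) + 1 ≠ 0 := by intro hcon; nlinarith [hn3, hk2]
  have d9 : (k:ℝ) + (n:ℝ) - 2 ≠ 0 := by intro hcon; nlinarith [hn3, hk2]
  obtain ⟨q, hq, he1, hode⟩ := isLegendre_poly_spec hP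
  obtain ⟨mA, mB⟩ := monster ((n:ℝ)) ((k:ℝ)) q hode
  obtain ⟨evU, evW⟩ := monster_eval ((n:ℝ)) ((k:ℝ)) d1 d2 q hode he1
  have c1 : ((n+2:ℕ):ℝ) = (n:ℝ) + 2 := by push_cast; ring
  have c2 : ((k-2:ℕ):ℝ) = (k:ℝ) - 2 := by
    rw [Nat.cast_sub hk]; norm_num
  have e1 : (Polynomial.C ((n:ℝ)+2) : Polynomial ℝ) = Polynomial.C ((n:ℝ)) + 2 := by
    simp only [map_add, map_ofNat]
  have e2 : (Polynomial.C ((k:ℝ)-2) : Polynomial ℝ) = Polynomial.C ((k:ℝ)) - 2 := by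
    simp only [map_sub, map_ofNat]
  have hQ' : IsLegendre (n+2) (k-2)
      (fun t => (Polynomial.C (((n:ℝ)-1)/(((k:ℝ)-1)*((k:ℝ)+(n:ℝ)-1)*(2*(k:ℝ)*((k:ℝ)+(n:ℝ)-3))))
        * Upoly ((n:ℝ)) ((k:ℝ)) q).eval t) := by
    apply isLegendre_of_poly
    · rw [Polynomial.eval_mul, Polynomial.eval_C, evU]
      field_simp
    · rw [c1, c2, Polynomial.derivative_C_mul, Polynomial.derivative_C_mul, e1, e2]
      linear_combination (Polynomial.C (((n:ℝ)-1)/(((k:ℝ)-1)*((k:ℝ)+(n:ℝ)-1)*(2*(k:ℝ)*((k:ℝ)+(n:ℝ)-3))))) * mA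
  have hR' : IsLegendre (n+2) k
      (fun t => (Polynomial.C (((n:ℝ)-1)/(2*((k:ℝ)-1)*((k:ℝ)+(n:ℝ)-1)*((k:ℝ)+1)*((k:ℝ)+(n:ℝ)-2)))
        * Wpoly ((n:ℝ)) ((k:ℝ)) q).eval t) := by
    apply isLegendre_of_poly
    · rw [Polynomial.eval_mul, Polynomial.eval_C, evW]
      field_simp
    · rw [c1, Polynomial.derivative_C_mul, Polynomial.derivative_C_mul, e1]
      linear_combination (Polynomial.C (((n:ℝ)-1)/(2*((k:ℝ)-1)*((k:ℝ)+(n:ℝ)-1)*((k:ℝ)+1)*((k:ℝ)+(n:ℝ)-2)))) * mB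
  have hQe := isLegendre_unique (m := n+2) (by omega) hQ hQ'
  have hRe := isLegendre_unique (m := n+2) (by omega) hR hR'
  have hQt : Q t = (((n:ℝ)-1)/(((k:ℝ)-1)*((k:ℝ)+(n:ℝ)-1)*(2*(k:ℝ)*((k:ℝ)+(n:ℝ)-3))))
      * (Upoly ((n:ℝ)) ((k:ℝ)) q).eval t := by
    rw [hQe]
    simp [Polynomial.eval_mul, Polynomial.eval_C]
  have hRt : R t = (((n:ℝ)-1)/(2*((k:ℝ)-1)*((k:ℝ)+(n:ℝ)-1)*((k:ℝ)+1)*((k:ℝ)+(n:ℝ)-2)))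
      * (Wpoly ((n:ℝ)) ((k:ℝ)) q).eval t := by
    rw [hRe]
    simp [Polynomial.eval_mul, Polynomial.eval_C]
  have hPfun : P = fun t => q.eval t := funext hq
  rw [hPfun, hQt, hRt]
  simp only [eval_iteratedDeriv q 2, Polynomial.deriv]
  rw [show Polynomial.derivative^[2] q = Polynomial.derivative (Polynomial.derivative q) from rfl]
  have hWe : (Wpoly ((n:ℝ)) ((k:ℝ)) q).eval t
      = (Upoly ((n:ℝ)) ((k:ℝ)) q).eval t - (2*(2*(k:ℝ)+(n:ℝ)-2)) * ((Apoly q).eval t) := by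
    unfold Wpoly
    simp [Polynomial.eval_sub, Polynomial.eval_mul, Polynomial.eval_C]
  have hAe : (Apoly q).eval t
      = (1 - t*t) * (Polynomial.derivative (Polynomial.derivative q)).eval t + q.eval t
        - t * (Polynomial.derivative q).eval t := by
    unfold Apoly
    simp [Polynomial.eval_sub, Polynomial.eval_add, Polynomial.eval_mul, Polynomial.eval_one,
      Polynomial.eval_X]
  rw [hWe, hAe]
  field_simp
  rw [eq_div_iff (by intro hcon; apply d7; linarith)]
  ring
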